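/- Let G be a countable group acting by homeomorphisms on a Cantor set Y, and let g ∈ G. Let Y_g = {y ∈ Y : g·y = y} be the fixed-point set of g, and suppose Y \ Y_g is a countable union of clopen sets U_n with g·U_n ∩ U_n = ∅. Then Y \ Y_g can be partitioned into three sets A, B, C, each open and relatively clopen in Y \ Y_g, such that g·A ∩ A = ∅, g·B ∩ B = ∅, and g·C ∩ C = ∅. -/
import Mathlib

open Set

namespace Stmt14

def pick (a b : Option (Fin 3)) : Fin 3 :=
  if some 0 ≠ a ∧ some 0 ≠ b then 0
  else if some 1 ≠ a ∧ some 1 ≠ b then 1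
  else 2

lemma pick_ne_left (a b : Option (Fin 3)) (x : Fin 3) (h : a = some x) : pick a b ≠ x := by
  subst h; revert b x; decide

lemma pick_ne_right (a b : Option (Fin 3)) (x : Fin 3) (h : b = some x) : pick a b ≠ x := by
  subst h; revert a x; decide

variable {Y : Type*} [TopologicalSpace Y]

noncomputable def rnk (U : ℕ → Set Y) (x : Y) : ℕ := sInf {n | x ∈ U n}

lemma rnk_spec {U : ℕ → Set Y} {x : Y} (h : ∃ n, x ∈ U n) : x ∈ U (rnk U x) :=
  Nat.sInf_mem h

lemma rnk_min {U : ℕ → Set Y} {x : Y} {m : ℕ} (hm : m < rnk U x) : x ∉ U m :=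
  Nat.notMem_of_lt_sInf hm

lemma rnk_le {U : ℕ → Set Y} {x : Y} {m : ℕ} (hm : x ∈ U m) : rnk U x ≤ m :=
  Nat.sInf_le hm

/-- disjointified pieces -/
def Vp (U : ℕ → Set Y) (n : ℕ) : Set Y := U n \ ⋃ m ∈ Finset.range n, U m

lemma mem_Vp_rnk {U : ℕ → Set Y} {x : Y} (h : ∃ n, x ∈ U n) : x ∈ Vp U (rnk U x) := by
  refine ⟨rnk_spec h, ?_⟩
  simp only [mem_iUnion, Finset.mem_range, not_exists]
  intro m hm
  exact fun hx => rnk_min hm hx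

lemma rnk_eq_of_mem_Vp {U : ℕ → Set Y} {x : Y} {n : ℕ} (h : x ∈ Vp U n) : rnk U x = n := by
  rcases h with ⟨h1, h2⟩
  simp only [mem_iUnion, Finset.mem_range, not_exists] at h2
  refine le_antisymm (rnk_le h1) ?_
  by_contra hlt
  exact h2 _ (lt_of_not_ge hlt) (rnk_spec ⟨n, h1⟩)

lemma isClopen_Vp {U : ℕ → Set Y} (hU : ∀ n, IsClopen (U n)) (n : ℕ) : IsClopen (Vp U n) :=
  (hU n).diff (isClopen_biUnion_finset fun m _ => hU m)

noncomputable def col (f : Y ≃ₜ Y) (U : ℕ → Set Y) (x : Y) : Fin 3 :=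
  pick
    (if h : rnk U (f x) < rnk U x then some (col f U (f x)) else none)
    (if h : rnk U (f.symm x) < rnk U x then some (col f U (f.symm x)) else none)
termination_by rnk U x

section main

variable (f : Y ≃ₜ Y) (U : ℕ → Set Y)

lemma col_def (x : Y) : col f U x =
    pick
      (if h : rnk U (f x) < rnk U x then some (col f U (f x)) else none)
      (if h : rnk U (f.symm x) < rnk U x then some (col f U (f.symm x)) else none) := by
  rw [col]

variable (hUmove : ∀ n, Disjoint (f '' U n) (U n))
variable (hUcover : (⋃ n, U n) = {y : Y | f y ≠ y})

include hUcover in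
lemma mem_S_f {x : Y} (hx : ∃ n, x ∈ U n) : ∃ n, f x ∈ U n := by
  have hx' : x ∈ ⋃ n, U n := mem_iUnion.mpr hx
  rw [hUcover] at hx'
  have : f (f x) ≠ f x := fun h => hx' (f.injective h)
  have : f x ∈ ⋃ n, U n := by rw [hUcover]; exact this
  exact mem_iUnion.mp this

include hUcover in
lemma mem_S_fsymm {x : Y} (hx : ∃ n, x ∈ U n) : ∃ n, f.symm x ∈ U n := by
  have hx' : x ∈ ⋃ n, U n := mem_iUnion.mpr hx
  rw [hUcover] at hx'
  have h1 : f (f.symm x) ≠ f.symm x := by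
    rw [f.apply_symm_apply]
    intro h
    apply hx'
    show f x = x
    conv_lhs => rw [h]
    exact f.apply_symm_apply x
  have : f.symm x ∈ ⋃ n, U n := by rw [hUcover]; exact h1
  exact mem_iUnion.mp this

include hUmove in
lemma rnk_f_ne {x : Y} (hx : ∃ n, x ∈ U n) (hfx : ∃ n, f x ∈ U n) :
    rnk U (f x) ≠ rnk U x := by
  intro h
  have h1 : f x ∈ U (rnk U x) := h ▸ rnk_spec hfx
  have h2 : f x ∈ f '' U (rnk U x) := ⟨x, rnk_spec hx, rfl⟩
  exact Set.disjoint_left.mp (hUmove (rnk U x)) h2 h1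

include hUmove hUcover in
lemma col_ne {x : Y} (hx : ∃ n, x ∈ U n) : col f U (f x) ≠ col f U x := by
  have hfx : ∃ n, f x ∈ U n := mem_S_f f U hUcover hx
  rcases lt_or_gt_of_ne (rnk_f_ne f U hUmove hx hfx) with hlt | hgt
  · rw [col_def f U x, dif_pos hlt]
    exact fun h => pick_ne_left _ _ _ rfl h.symm
  · rw [col_def f U (f x)]
    have hsym : rnk U (f.symm (f x)) < rnk U (f x) := by
      rw [f.symm_apply_apply]; exact hgt
    rw [dif_pos hsym]
    apply pick_ne_right
    rw [f.symm_apply_apply]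

variable (hUclopen : ∀ n, IsClopen (U n))

include hUmove hUcover hUclopen in
lemma isClopen_class : ∀ n (i : Fin 3), IsClopen (Vp U n ∩ col f U ⁻¹' {i}) := by
  intro n
  induction n using Nat.strong_induction_on with
  | _ n ih =>
  intro i
  -- target sets for first coordinate
  set T1 : Option (Fin 3) → Set Y := fun a =>
    match a with
    | some j => f ⁻¹' (⋃ m ∈ Finset.range n, (Vp U m ∩ col f U ⁻¹' {j}))
    | none => f ⁻¹' (⋃ m ∈ Finset.range n, Vp U m)ᶜ with hT1
  set T2 : Option (Fin 3) → Set Y := fun a =>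
    match a with
    | some j => f.symm ⁻¹' (⋃ m ∈ Finset.range n, (Vp U m ∩ col f U ⁻¹' {j}))
    | none => f.symm ⁻¹' (⋃ m ∈ Finset.range n, Vp U m)ᶜ with hT2
  have hT1c : ∀ a, IsClopen (T1 a) := by
    rintro (_ | j)
    · exact ((isClopen_biUnion_finset fun m hm => isClopen_Vp hUclopen m).compl).preimage
        f.continuous
    · exact (isClopen_biUnion_finset fun m hm =>
        ih m (Finset.mem_range.mp hm) j).preimage f.continuous
  have hT2c : ∀ a, IsClopen (T2 a) := by
    rintro (_ | j)
    · exact ((isClopen_biUnion_finset fun m hm => isClopen_Vp hUclopen m).compl).preimage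
        f.symm.continuous
    · exact (isClopen_biUnion_finset fun m hm =>
        ih m (Finset.mem_range.mp hm) j).preimage f.symm.continuous
  -- membership characterizations on Vp U n
  have key1 : ∀ x ∈ Vp U n, ∀ a,
      ((if h : rnk U (f x) < rnk U x then some (col f U (f x)) else none) = a ↔ x ∈ T1 a) := by
    intro x hxV a
    have hxS : ∃ m, x ∈ U m := ⟨n, hxV.1⟩
    have hfxS : ∃ m, f x ∈ U m := mem_S_f f U hUcover hxS
    have hrx : rnk U x = n := rnk_eq_of_mem_Vp hxV
    constructor
    · intro ha
      by_cases hlt : rnk U (f x) < rnk U x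
      · rw [dif_pos hlt] at ha
        subst ha
        simp only [hT1, mem_preimage, mem_iUnion, Finset.mem_range]
        exact ⟨rnk U (f x), hrx ▸ hlt, mem_Vp_rnk hfxS, rfl⟩
      · rw [dif_neg hlt] at ha
        subst ha
        simp only [hT1, mem_preimage, mem_compl_iff, mem_iUnion, Finset.mem_range, not_exists]
        rintro m hm hfm
        exact hlt (by rw [rnk_eq_of_mem_Vp hfm, hrx]; exact hm)
    · intro hmem
      match a with
      | some j =>
        simp only [hT1, mem_preimage, mem_iUnion, Finset.mem_range] at hmem
        obtain ⟨m, hm, hfV, hcol⟩ := hmem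
        have hrfx : rnk U (f x) = m := rnk_eq_of_mem_Vp hfV
        have hlt : rnk U (f x) < rnk U x := by rw [hrfx, hrx]; exact hm
        rw [dif_pos hlt]
        simpa using hcol
      | none =>
        simp only [hT1, mem_preimage, mem_compl_iff, mem_iUnion, Finset.mem_range,
          not_exists] at hmem
        have hlt : ¬ rnk U (f x) < rnk U x := by
          intro hlt
          exact hmem (rnk U (f x)) (hrx ▸ hlt) (mem_Vp_rnk hfxS)
        rw [dif_neg hlt]
  have key2 : ∀ x ∈ Vp U n, ∀ a,
      ((if h : rnk U (f.symm x) < rnk U x then some (col f U (f.symm x)) else none) = a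
        ↔ x ∈ T2 a) := by
    intro x hxV a
    have hxS : ∃ m, x ∈ U m := ⟨n, hxV.1⟩
    have hfxS : ∃ m, f.symm x ∈ U m := mem_S_fsymm f U hUcover hxS
    have hrx : rnk U x = n := rnk_eq_of_mem_Vp hxV
    constructor
    · intro ha
      by_cases hlt : rnk U (f.symm x) < rnk U x
      · rw [dif_pos hlt] at ha
        subst ha
        simp only [hT2, mem_preimage, mem_iUnion, Finset.mem_range]
        exact ⟨rnk U (f.symm x), hrx ▸ hlt, mem_Vp_rnk hfxS, rfl⟩
      · rw [dif_neg hlt] at ha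
        subst ha
        simp only [hT2, mem_preimage, mem_compl_iff, mem_iUnion, Finset.mem_range, not_exists]
        rintro m hm hfm
        exact hlt (by rw [rnk_eq_of_mem_Vp hfm, hrx]; exact hm)
    · intro hmem
      match a with
      | some j =>
        simp only [hT2, mem_preimage, mem_iUnion, Finset.mem_range] at hmem
        obtain ⟨m, hm, hfV, hcol⟩ := hmem
        have hlt : rnk U (f.symm x) < rnk U x := by
          rw [rnk_eq_of_mem_Vp hfV, hrx]; exact hm
        rw [dif_pos hlt]
        simpa using hcol
      | none =>
        simp only [hT2, mem_preimage, mem_compl_iff, mem_iUnion, Finset.mem_range,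
          not_exists] at hmem
        have hlt : ¬ rnk U (f.symm x) < rnk U x := by
          intro hlt
          exact hmem (rnk U (f.symm x)) (hrx ▸ hlt) (mem_Vp_rnk hfxS)
        rw [dif_neg hlt]
  have heq : Vp U n ∩ col f U ⁻¹' {i} =
      ⋃ (p : Option (Fin 3) × Option (Fin 3)) (_ : pick p.1 p.2 = i),
        (Vp U n ∩ T1 p.1 ∩ T2 p.2) := by
    ext x
    simp only [mem_inter_iff, mem_preimage, mem_singleton_iff, mem_iUnion]
    constructor
    · rintro ⟨hxV, hcol⟩
      refine ⟨⟨(if h : rnk U (f x) < rnk U x then some (col f U (f x)) else none),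
        (if h : rnk U (f.symm x) < rnk U x then some (col f U (f.symm x)) else none)⟩,
        ?_, ⟨hxV, ?_⟩, ?_⟩
      · rw [← col_def]; exact hcol
      · exact (key1 x hxV _).mp rfl
      · exact (key2 x hxV _).mp rfl
    · rintro ⟨⟨a, b⟩, hpick, ⟨hxV, hxa⟩, hxb⟩
      refine ⟨hxV, ?_⟩
      rw [col_def, (key1 x hxV a).mpr hxa, (key2 x hxV b).mpr hxb]
      exact hpick
  rw [heq]
  exact isClopen_iUnion_of_finite fun p => isClopen_iUnion_of_finite fun hp =>
    ((isClopen_Vp hUclopen n).inter (hT1c p.1)).inter (hT2c p.2)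

end main

end Stmt14

open Stmt14 in
/-- Partitioning the non-fixed-point set of a homeomorphism of a Cantor set into three
relatively clopen pieces, each moved off itself. -/
theorem stmt14 {Y : Type*} [TopologicalSpace Y] [CompactSpace Y]
    [TopologicalSpace.MetrizableSpace Y] [TotallyDisconnectedSpace Y] [PerfectSpace Y]
    (f : Y ≃ₜ Y)
    (U : ℕ → Set Y) (hUclopen : ∀ n, IsClopen (U n))
    (hUmove : ∀ n, Disjoint (f '' U n) (U n))
    (hUcover : (⋃ n, U n) = {y : Y | f y ≠ y}) :
    ∃ A B C : Set Y,
      A ∪ B ∪ C = {y : Y | f y ≠ y} ∧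
      Disjoint A B ∧ Disjoint A C ∧ Disjoint B C ∧
      IsOpen A ∧ IsOpen B ∧ IsOpen C ∧
      -- each piece is relatively closed (hence clopen) in `Y \ Y_g = {y | f y ≠ y}`
      closure A ∩ {y : Y | f y ≠ y} ⊆ A ∧
      closure B ∩ {y : Y | f y ≠ y} ⊆ B ∧
      closure C ∩ {y : Y | f y ≠ y} ⊆ C ∧
      Disjoint (f '' A) A ∧ Disjoint (f '' B) B ∧ Disjoint (f '' C) C := by
  classical
  set S : Set Y := {y : Y | f y ≠ y} with hS
  set P : Fin 3 → Set Y := fun i => ⋃ n, (Vp U n ∩ col f U ⁻¹' {i}) with hP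
  have hclass := isClopen_class f U hUmove hUcover hUclopen
  -- membership in P i
  have hmemP : ∀ (i : Fin 3) (x : Y), x ∈ P i ↔ (∃ n, x ∈ U n) ∧ col f U x = i := by
    intro i x
    simp only [hP, mem_iUnion, mem_inter_iff, mem_preimage, mem_singleton_iff]
    constructor
    · rintro ⟨n, hV, hc⟩; exact ⟨⟨n, hV.1⟩, hc⟩
    · rintro ⟨hx, hc⟩; exact ⟨rnk U x, mem_Vp_rnk hx, hc⟩
  have hSiff : ∀ x : Y, x ∈ S ↔ ∃ n, x ∈ U n := by
    intro x
    rw [← hUcover, mem_iUnion]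
  have hopen : ∀ i, IsOpen (P i) := fun i => isOpen_iUnion fun n => (hclass n i).isOpen
  have hdisj : ∀ i j : Fin 3, i ≠ j → Disjoint (P i) (P j) := by
    intro i j hij
    rw [Set.disjoint_left]
    intro x hxi hxj
    rw [hmemP] at hxi hxj
    exact hij (hxi.2 ▸ hxj.2 ▸ rfl)
  have hcl : ∀ i, closure (P i) ∩ S ⊆ P i := by
    intro i x ⟨hxcl, hxS⟩
    have hxU : ∃ n, x ∈ U n := (hSiff x).mp hxS
    set n := rnk U x with hn
    have hxV : x ∈ Vp U n := mem_Vp_rnk hxU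
    have hVopen : IsOpen (Vp U n) := (isClopen_Vp hUclopen n).isOpen
    have hsub : Vp U n ∩ closure (P i) ⊆ closure (Vp U n ∩ P i) := hVopen.inter_closure
    have hx2 : x ∈ closure (Vp U n ∩ P i) := hsub ⟨hxV, hxcl⟩
    have hVP : Vp U n ∩ P i = Vp U n ∩ col f U ⁻¹' {i} := by
      ext y
      simp only [mem_inter_iff, hmemP, mem_preimage, mem_singleton_iff]
      constructor
      · rintro ⟨hyV, _, hc⟩; exact ⟨hyV, hc⟩
      · rintro ⟨hyV, hc⟩; exact ⟨hyV, ⟨n, hyV.1⟩, hc⟩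
    rw [hVP] at hx2
    have := (hclass n i).isClosed.closure_eq ▸ hx2
    rw [(hclass n i).isClosed.closure_eq] at hx2
    exact ((hmemP i x).mpr ⟨hxU, hx2.2⟩)
  have hmove : ∀ i, Disjoint (f '' P i) (P i) := by
    intro i
    rw [Set.disjoint_left]
    rintro x ⟨y, hy, rfl⟩ hfy
    rw [hmemP] at hy hfy
    exact col_ne f U hUmove hUcover hy.1 (hfy.2.trans hy.2.symm)
  have hunion : P 0 ∪ P 1 ∪ P 2 = S := by
    ext x
    simp only [mem_union, hmemP, hSiff]
    constructor
    · rintro ((⟨h, _⟩ | ⟨h, _⟩) | ⟨h, _⟩) <;> exact h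
    · intro h
      rcases Fin.cases (motive := fun _ => True) trivial (fun _ => trivial) (col f U x) with _
      have : col f U x = 0 ∨ col f U x = 1 ∨ col f U x = 2 := by omega
      rcases this with h0 | h1 | h2
      · exact Or.inl (Or.inl ⟨h, h0⟩)
      · exact Or.inl (Or.inr ⟨h, h1⟩)
      · exact Or.inr ⟨h, h2⟩
  exact ⟨P 0, P 1, P 2, hunion, hdisj 0 1 (by decide), hdisj 0 2 (by decide),
    hdisj 1 2 (by decide), hopen 0, hopen 1, hopen 2, hcl 0, hcl 1, hcl 2,
    hmove 0, hmove 1, hmove 2⟩
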